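/- arXiv:0812.0041 — 2 statements merged into one kernel-verified Lean document; each statement's English description precedes it below -/
import Mathlib

section
/- The function D_ω(M) = (-1)^{n-1} · ω̄ⁿ · det(M - ωI₂ₙ) is real-valued for all ω on the unit circle and all M ∈ Sp(2n). -/
open Matrix

/-- The standard symplectic matrix J on ℝ^{2n}. -/
def Jmat (n : ℕ) : Matrix (Fin n ⊕ Fin n) (Fin n ⊕ Fin n) ℝ :=
  Matrix.fromBlocks 0 (-1) 1 0

/-- M is symplectic: MᵀJM = J. -/
def IsSymplectic {n : ℕ} (M : Matrix (Fin n ⊕ Fin n) (Fin n ⊕ Fin n) ℝ) : Prop :=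
  Mᵀ * Jmat n * M = Jmat n

section Aux

variable {n : ℕ}

lemma Jmat_eq : Jmat n = Matrix.J (Fin n) ℝ := rfl


lemma det_blocks (X Y : Matrix (Fin n) (Fin n) ℂ) :
    (fromBlocks X Y (-Y) X).det = (X + Complex.I • Y).det * (X - Complex.I • Y).det := by
  have hP : (fromBlocks X Y (-Y) X) * (fromBlocks 1 1 (Complex.I • 1) (-(Complex.I • 1))) =
      (fromBlocks 1 1 (Complex.I • 1) (-(Complex.I • 1))) *
        (fromBlocks (X + Complex.I • Y) 0 0 (X - Complex.I • Y)) := by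
    simp only [fromBlocks_multiply, Matrix.mul_smul, Matrix.mul_one, Matrix.one_mul,
      Matrix.smul_mul, Matrix.mul_zero, Matrix.zero_mul, add_zero, zero_add,
      Matrix.mul_neg, Matrix.neg_mul, smul_smul, Complex.I_mul_I, neg_one_smul,
      smul_add, smul_sub, neg_neg, neg_smul, one_smul]
    congr 1 <;> abel
  have hPQ : (fromBlocks 1 1 (Complex.I • 1) (-(Complex.I • 1)) : Matrix (Fin n ⊕ Fin n) (Fin n ⊕ Fin n) ℂ) *
      (fromBlocks 1 (-(Complex.I • 1)) 1 (Complex.I • 1) : Matrix (Fin n ⊕ Fin n) (Fin n ⊕ Fin n) ℂ) =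
      fromBlocks ((2:ℂ) • (1:Matrix (Fin n) (Fin n) ℂ)) 0 0 ((2:ℂ) • 1) := by
    simp only [fromBlocks_multiply, Matrix.mul_smul, Matrix.mul_one, Matrix.one_mul,
      Matrix.smul_mul, Matrix.mul_neg, Matrix.neg_mul, smul_smul, Complex.I_mul_I,
      neg_one_smul, neg_neg, neg_smul, one_smul]
    congr 1 <;> simp [smul_smul, Complex.I_mul_I, two_smul]
  have hdetP : (fromBlocks 1 1 (Complex.I • 1) (-(Complex.I • 1)) :
      Matrix (Fin n ⊕ Fin n) (Fin n ⊕ Fin n) ℂ).det ≠ 0 := by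
    intro h
    have h2 := congrArg Matrix.det hPQ
    rw [det_mul, h, zero_mul, det_fromBlocks_zero₂₁, Matrix.det_smul, det_one] at h2
    simp at h2
  have := congrArg Matrix.det hP
  rw [det_mul, det_mul, det_fromBlocks_zero₂₁] at this
  exact mul_right_cancel₀ hdetP (by linear_combination this)

lemma det_nonneg_of_commute_J (B : Matrix (Fin n ⊕ Fin n) (Fin n ⊕ Fin n) ℝ)
    (h : B * Jmat n = Jmat n * B) : 0 ≤ B.det := by
  set X := B.toBlocks₁₁
  set Y := B.toBlocks₁₂
  set Z := B.toBlocks₂₁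
  set W := B.toBlocks₂₂
  have hB : B = fromBlocks X Y Z W := (fromBlocks_toBlocks B).symm
  rw [hB, Jmat, fromBlocks_multiply, fromBlocks_multiply] at h
  simp only [Matrix.mul_zero, Matrix.mul_one, Matrix.mul_neg, Matrix.zero_mul,
    Matrix.one_mul, Matrix.neg_mul, zero_add, add_zero, Matrix.mul_neg] at h
  have h12 := congrArg Matrix.toBlocks₁₂ h
  have h11 := congrArg Matrix.toBlocks₁₁ h
  simp only [toBlocks_fromBlocks₁₂, toBlocks_fromBlocks₁₁] at h12 h11
  -- h11 : Y = -Z, h12 : -X = -W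
  have hZ : Z = -Y := neg_eq_iff_eq_neg.mp h11.symm
  have hW : W = X := (neg_inj.mp h12).symm
  rw [hZ, hW] at hB
  -- pass to ℂ
  have hmap : B.map (Complex.ofReal) =
      fromBlocks (X.map Complex.ofReal) (Y.map Complex.ofReal)
        (-(Y.map Complex.ofReal)) (X.map Complex.ofReal) := by
    rw [hB]
    ext (i | i) (j | j) <;> simp [fromBlocks, Matrix.map_apply]
  have hdetmap : (Complex.ofReal B.det : ℂ) = (B.map Complex.ofReal).det := by
    exact (RingHom.map_det Complex.ofRealHom B).symm ▸ rfl
  set Xc := X.map Complex.ofReal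
  set Yc := Y.map Complex.ofReal
  set z := (Xc + Complex.I • Yc).det with hz
  have hcm : (Xc + Complex.I • Yc).map (starRingEnd ℂ) = Xc - Complex.I • Yc := by
    ext i j
    simp [Xc, Yc, Matrix.map_apply, Matrix.add_apply, Matrix.sub_apply, Matrix.smul_apply, sub_eq_add_neg]
  have hdet2 : (Complex.ofReal B.det : ℂ) = z * (starRingEnd ℂ) z := by
    rw [hdetmap, hmap, det_blocks, hz, RingHom.map_det, RingHom.mapMatrix_apply, hcm]
  rw [mul_comm, ← Complex.normSq_eq_conj_mul_self] at hdet2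
  have : B.det = Complex.normSq z := by exact_mod_cast hdet2
  rw [this]
  exact Complex.normSq_nonneg z

lemma symplectic_det_one (M : Matrix (Fin n ⊕ Fin n) (Fin n ⊕ Fin n) ℝ)
    (hM : IsSymplectic M) : M.det = 1 := by
  have hJJ : Jmat n * Jmat n = -1 := Matrix.J_squared (Fin n) ℝ
  have hJdet : (Jmat n).det * (Jmat n).det = 1 := Matrix.J_det_mul_J_det (Fin n) ℝ
  have hJdet0 : (Jmat n).det ≠ 0 := fun h => by simp [h] at hJdet
  -- det M * det M = 1
  have hd2 : M.det * M.det = 1 := by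
    have := congrArg Matrix.det hM
    rw [det_mul, det_mul, det_transpose] at this
    apply mul_right_cancel₀ hJdet0
    rw [one_mul]; linear_combination this
  -- B = M + J M (-J) commutes with J
  set B := M + Jmat n * M * (-(Jmat n)) with hBdef
  have hcomm : B * Jmat n = Jmat n * B := by
    rw [hBdef]
    have h1 : (Jmat n * M * -Jmat n) * Jmat n = Jmat n * M := by
      rw [Matrix.mul_assoc (Jmat n * M), Matrix.neg_mul, hJJ]; simp [Matrix.mul_assoc]
    have h2 : Jmat n * (Jmat n * M * -Jmat n) = M * Jmat n := by
      rw [← Matrix.mul_assoc, ← Matrix.mul_assoc, hJJ]; simp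
    rw [Matrix.add_mul, Matrix.mul_add, h1, h2]; abel
  have hBnn : 0 ≤ B.det := det_nonneg_of_commute_J B hcomm
  -- Mᵀ * B = MᵀM + 1
  have hN : Mᵀ * B = Mᵀ * M + 1 := by
    rw [hBdef, Matrix.mul_add]
    congr 1
    calc Mᵀ * (Jmat n * M * -Jmat n) = (Mᵀ * Jmat n * M) * -Jmat n := by
          simp [Matrix.mul_assoc]
      _ = Jmat n * -Jmat n := by rw [hM]
      _ = 1 := by rw [Matrix.mul_neg, hJJ, neg_neg]
  -- MᵀM + 1 pos def
  have hMt : Mᵀ = Mᴴ := by ext i j; simp [conjTranspose, Matrix.map_apply]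
  have hpd : (Mᵀ * M + 1).PosDef := by
    rw [hMt]
    exact Matrix.PosDef.posSemidef_add (Matrix.posSemidef_conjTranspose_mul_self M)
      Matrix.PosDef.one
  have hNdet : 0 < (Mᵀ * M + 1).det := hpd.det_pos
  have hprod : 0 < M.det * B.det := by
    have := congrArg Matrix.det hN
    rw [det_mul, det_transpose] at this
    rw [this]; exact hNdet
  have hdpos : 0 < M.det := by nlinarith
  rcases mul_self_eq_one_iff.mp hd2 with h | h
  · exact h
  · linarith

lemma map_ofReal_mul {m : Type*} [Fintype m] (X Y : Matrix m m ℝ) :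
    (X * Y).map Complex.ofReal = X.map Complex.ofReal * Y.map Complex.ofReal := by
  ext i j; simp [Matrix.map_apply, Matrix.mul_apply]

lemma det_map_ofReal {m : Type*} [Fintype m] [DecidableEq m] (X : Matrix m m ℝ) :
    (X.map Complex.ofReal).det = Complex.ofReal X.det := by
  have := RingHom.map_det Complex.ofRealHom X
  exact this.symm

lemma Jmap : (Jmat n).map Complex.ofReal = Matrix.J (Fin n) ℂ := by
  ext (i | i) (j | j) <;>
    simp [Jmat, Matrix.J, fromBlocks, Matrix.map_apply, Matrix.one_apply,
      Matrix.neg_apply, apply_ite Complex.ofReal]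

end Aux

/-- D_ω(M) = (-1)^{n-1} ω̄ⁿ det(M - ωI) is real for |ω| = 1 and M symplectic. -/
theorem stmt_7 {n : ℕ} (M : Matrix (Fin n ⊕ Fin n) (Fin n ⊕ Fin n) ℝ)
    (hM : IsSymplectic M) (ω : ℂ) (hω : ‖ω‖ = 1) :
    ((-1 : ℂ) ^ (n - 1) * (starRingEnd ℂ ω) ^ n *
      (M.map (Complex.ofReal) - ω • 1).det).im = 0 := by
  set c := starRingEnd ℂ ω with hc
  have hcω : c * ω = 1 := by
    rw [hc, mul_comm, Complex.mul_conj]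
    norm_cast
    rw [Complex.normSq_eq_norm_sq, hω, one_pow]
  set A := M.map (Complex.ofReal) with hA
  set Jc : Matrix (Fin n ⊕ Fin n) (Fin n ⊕ Fin n) ℂ := Matrix.J (Fin n) ℂ with hJc
  have hAsymp : Aᵀ * Jc * A = Jc := by
    rw [hA, hJc, ← Jmap, ← Matrix.transpose_map, ← map_ofReal_mul, ← map_ofReal_mul, hM]
  have hAdet : A.det = 1 := by
    rw [hA, det_map_ofReal, symplectic_det_one M hM, Complex.ofReal_one]
  have hmem : A ∈ Matrix.symplecticGroup (Fin n) ℂ := SymplecticGroup.mem_iff'.mpr hAsymp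
  have hAinv_eq : A⁻¹ = -Jc * Aᵀ * Jc := SymplecticGroup.inv_eq_symplectic_inv A hmem
  have hJJc : Jc * Jc = -1 := Matrix.J_squared (Fin n) ℂ
  have h1 : Jc * -Jc = 1 := by rw [Matrix.mul_neg, hJJc, neg_neg]
  have hAT : Aᵀ = Jc * A⁻¹ * -Jc := by
    rw [hAinv_eq]
    symm
    calc Jc * (-Jc * Aᵀ * Jc) * -Jc
        = (Jc * -Jc) * (Aᵀ * (Jc * -Jc)) := by simp only [Matrix.mul_assoc]
      _ = Aᵀ := by rw [h1, Matrix.mul_one, Matrix.one_mul]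
  have hinv : A⁻¹ * A = 1 := nonsing_inv_mul A (by rw [hAdet]; exact isUnit_one)
  have hdetinv : A⁻¹.det = 1 := by
    rw [Matrix.det_nonsing_inv, hAdet]; simp
  have hJcdet : Jc.det * Jc.det = 1 := Matrix.J_det_mul_J_det (Fin n) ℂ
  have hcard : Fintype.card (Fin n ⊕ Fin n) = n + n := by
    simp [Fintype.card_sum]
  have hdet_c : (A - c • 1).det = c ^ (n + n) * (A - ω • 1).det := by
    have e1 : (A - c • 1).det = (Aᵀ - c • 1).det := by
      rw [← Matrix.det_transpose (A - c • 1), Matrix.transpose_sub, Matrix.transpose_smul,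
        Matrix.transpose_one]
    have e2 : Aᵀ - c • 1 = Jc * (A⁻¹ - c • 1) * -Jc := by
      rw [Matrix.mul_sub, Matrix.sub_mul, ← hAT, Matrix.mul_smul, Matrix.smul_mul,
        Matrix.mul_one, h1]
    have e3 : A⁻¹ * ((-c) • (A - ω • 1)) = A⁻¹ - c • 1 := by
      rw [Matrix.mul_smul, Matrix.mul_sub, hinv, Matrix.mul_smul, Matrix.mul_one,
        smul_sub, smul_smul, neg_mul, hcω]
      simp only [neg_smul, one_smul, sub_neg_eq_add]
      abel
    have e4 : ((-c) • (A - ω • 1)).det = c ^ (n + n) * (A - ω • 1).det := by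
      rw [Matrix.det_smul, hcard, Even.neg_pow (Even.add_self n)]
    rw [e1, e2, det_mul, det_mul, Matrix.det_neg, hcard, Even.neg_one_pow (Even.add_self n),
      one_mul, ← e3, det_mul, hdetinv, one_mul, e4]
    linear_combination (c ^ (n + n) * (A - ω • 1).det) * hJcdet
  have hconjdet : (starRingEnd ℂ) ((A - ω • 1).det) = (A - c • 1).det := by
    rw [RingHom.map_det, RingHom.mapMatrix_apply]
    congr 1
    ext i j
    simp only [Matrix.map_apply, Matrix.sub_apply, Matrix.smul_apply, Matrix.one_apply,
      smul_eq_mul, map_sub, _root_.map_mul, hA, Complex.conj_ofReal,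
      apply_ite (starRingEnd ℂ), _root_.map_one, map_zero, ← hc]
  rw [← Complex.conj_eq_iff_im, _root_.map_mul, _root_.map_mul, map_pow, map_pow, map_neg, _root_.map_one]
  rw [hc, Complex.conj_conj, hconjdet, hdet_c, ← hc]
  have hkey : ω ^ n * c ^ (n + n) = c ^ n := by
    have : ω ^ n * c ^ (n + n) = (ω * c) ^ n * c ^ n := by ring
    rw [this, mul_comm ω c, hcω, one_pow, one_mul]
  linear_combination ((-1 : ℂ) ^ (n - 1) * (A - ω • 1).det) * hkey
end

section
/- If y: ℝ → ℝ^{2n} is a continuous τ-periodic curve whose image satisfies O(y) ∩ O(-y) ≠ ∅, where y solves ẏ = JH'(y) for an even C¹ Hamiltonian H with uniqueness of solutions, and τ is the minimal period, then y(t) = -y(t + τ/2) for all t ∈ ℝ. -/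
open Matrix

/-- If y is a τ-periodic solution of ẏ = J∇H(y) with H even and C¹,
solutions of the ODE are unique given an initial value, τ is the minimal
period of y, and the orbits O(y), O(-y) intersect, then
y(t) = -y(t + τ/2) for all t. -/
theorem stmt_15 {n : ℕ} (τ : ℝ) (hτ : 0 < τ)
    (H : EuclideanSpace ℝ (Fin n ⊕ Fin n) → ℝ)
    (g : EuclideanSpace ℝ (Fin n ⊕ Fin n) → EuclideanSpace ℝ (Fin n ⊕ Fin n))
    (hgrad : ∀ x, HasGradientAt H (g x) x)
    (heven : ∀ x, H (-x) = H x)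
    (y : ℝ → EuclideanSpace ℝ (Fin n ⊕ Fin n))
    (hcont : Continuous y)
    (hy : ∀ t : ℝ, HasDerivAt y
      (Matrix.toEuclideanLin (Jmat n) (g (y t))) t)
    -- uniqueness of solutions of the ODE ẋ = J∇H(x):
    (huniq : ∀ z w : ℝ → EuclideanSpace ℝ (Fin n ⊕ Fin n),
      (∀ t : ℝ, HasDerivAt z (Matrix.toEuclideanLin (Jmat n) (g (z t))) t) →
      (∀ t : ℝ, HasDerivAt w (Matrix.toEuclideanLin (Jmat n) (g (w t))) t) →
      (∃ t₀ : ℝ, z t₀ = w t₀) → z = w)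
    -- τ is the minimal period of y:
    (hper : Function.Periodic y τ)
    (hmin : ∀ τ' : ℝ, 0 < τ' → τ' < τ → ¬ Function.Periodic y τ')
    -- the orbits of y and -y intersect:
    (hint : ∃ t₁ t₂ : ℝ, y t₁ = -(y t₂)) :
    ∀ t : ℝ, y t = -(y (t + τ / 2)) := by
  classical
  -- the gradient of an even function is odd
  have godd : ∀ x : EuclideanSpace ℝ (Fin n ⊕ Fin n), g (-x) = -g x := by
    intro x
    have h1 : HasFDerivAt H (InnerProductSpace.toDual ℝ (EuclideanSpace ℝ (Fin n ⊕ Fin n)) (g x)) x :=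
      (hgrad x).hasFDerivAt
    have hL : HasFDerivAt (fun v : EuclideanSpace ℝ (Fin n ⊕ Fin n) => -v) (-(ContinuousLinearMap.id ℝ (EuclideanSpace ℝ (Fin n ⊕ Fin n)))) x :=
      (hasFDerivAt_id x).neg
    have h3 : HasFDerivAt (fun v : EuclideanSpace ℝ (Fin n ⊕ Fin n) => H (-v))
        ((InnerProductSpace.toDual ℝ (EuclideanSpace ℝ (Fin n ⊕ Fin n)) (g (-x))).comp (-(ContinuousLinearMap.id ℝ (EuclideanSpace ℝ (Fin n ⊕ Fin n))))) x :=
      ((hgrad (-x)).hasFDerivAt).comp x hL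
    have hfun : (fun v : EuclideanSpace ℝ (Fin n ⊕ Fin n) => H (-v)) = H := funext heven
    rw [hfun] at h3
    have heq := h1.unique h3
    have key : ∀ v : EuclideanSpace ℝ (Fin n ⊕ Fin n), (inner ℝ (g x) v : ℝ) = inner ℝ (g (-x)) (-v) := by
      intro v
      have := ContinuousLinearMap.ext_iff.mp heq v
      simpa [InnerProductSpace.toDual_apply_apply] using this
    have key2 : (inner ℝ (g x + g (-x)) (g x + g (-x)) : ℝ) = 0 := by
      have := key (g x + g (-x))
      rw [inner_neg_right] at this
      rw [inner_add_left]
      linarith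
    have h0 : g x + g (-x) = 0 := by rwa [inner_self_eq_zero] at key2
    linear_combination (norm := abel) h0
  obtain ⟨t₁, t₂, hint⟩ := hint
  set c : ℝ := t₂ - t₁ with hc
  -- the shifted negated curve is also a solution
  have hw : ∀ t : ℝ, HasDerivAt (fun t => -(y (t + c)))
      (Matrix.toEuclideanLin (Jmat n) (g (-(y (t + c))))) t := by
    intro t
    have h1 : HasDerivAt (fun t : ℝ => y (t + c))
        (Matrix.toEuclideanLin (Jmat n) (g (y (t + c)))) t := by
      have := (hy (t + c)).scomp t ((hasDerivAt_id t).add_const c)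
      rw [one_smul] at this
      exact this
    have h2 := h1.neg
    rw [godd, map_neg]
    exact h2
  -- uniqueness of solutions gives antiperiodicity with antiperiod c
  have heqfun : y = fun t => -(y (t + c)) := by
    apply huniq _ _ hy hw
    exact ⟨t₁, by simp [hc, hint]⟩
  have key : ∀ t : ℝ, y t = -(y (t + c)) := fun t => congrFun heqfun t
  have hanti : Function.Antiperiodic y c := by
    intro t
    rw [key t, neg_neg]
  -- reduce the antiperiod modulo τ
  set r : ℝ := c - (⌊c / τ⌋ : ℤ) * τ with hrdef
  have hanti_r : Function.Antiperiodic y r := by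
    intro x
    have hx : x + r = (x + c) - (⌊c / τ⌋ : ℤ) * τ := by rw [hrdef]; ring
    rw [hx, hper.sub_int_mul_eq, hanti]
  have hrfract : r = τ * Int.fract (c / τ) := by
    rw [hrdef, Int.fract]
    field_simp
  have hr0 : 0 ≤ r := by
    rw [hrfract]
    exact mul_nonneg hτ.le (Int.fract_nonneg _)
  have hr1 : r < τ := by
    rw [hrfract]
    calc τ * Int.fract (c / τ) < τ * 1 := by
          exact mul_lt_mul_of_pos_left (Int.fract_lt_one _) hτ
      _ = τ := mul_one τ
  by_cases hr : r = 0
  · -- then y ≡ 0, contradicting minimality of τ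
    exfalso
    have hzero : ∀ t : ℝ, y t = 0 := by
      intro t
      have := hanti_r t
      rw [hr, add_zero] at this
      have h2 : (2 : ℝ) • y t = 0 := by
        rw [two_smul]
        nth_rewrite 1 [this]; abel
      rcases smul_eq_zero.mp h2 with h | h
      · norm_num at h
      · exact h
    exact hmin (τ / 2) (by linarith) (by linarith)
      (fun x => by rw [hzero, hzero])
  · have hrpos : 0 < r := lt_of_le_of_ne hr0 (Ne.symm hr)
    have hper2 : Function.Periodic y (r + r) := hanti_r.add hanti_r
    rcases lt_trichotomy (r + r) τ with h | h | h
    · exact absurd hper2 (hmin (r + r) (by linarith) h)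
    · intro t
      have hr2 : τ / 2 = r := by rw [div_eq_iff (two_ne_zero)]; linarith
      rw [hr2, hanti_r t, neg_neg]
    · exfalso
      have hper3 : Function.Periodic y (r + r - τ) := hper2.sub_period hper
      exact hmin (r + r - τ) (by linarith) (by linarith) hper3
end
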